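/- Let H = −A + 2gU + λV on ℓ²(X) with g > 1, λV ≥ 0 a non-negative multiplication operator, A the hard-core adjacency operator and U the cluster-counting operator on configurations of n particles in Λ = [−L,L]∩ℤ. Let Q^{(k)} denote the orthogonal projection onto configurations with at least k clusters. Then Q^{(k)} H Q^{(k)} ≥ 2k(g−1) Q^{(k)} for all 1 ≤ k ≤ n. -/

import Mathlib

open scoped BigOperators

/-- Configurations of `n` hard-core particles in `Λ = [-L, L] ∩ ℤ`. -/
abbrev Config (n : ℕ) (L : ℤ) : Type :=
  {x : Fin n → ℤ // StrictMono x ∧ ∀ i, -L ≤ x i ∧ x i ≤ L}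

/-- The ℓ¹-distance between configurations. -/
noncomputable def ell1 {n : ℕ} {L : ℤ} (x y : Config n L) : ℝ :=
  ∑ i, |((x.1 i - y.1 i : ℤ) : ℝ)|

/-- The number of clusters (maximal blocks of consecutive occupied sites)
of a configuration, counted via its cluster left endpoints. -/
def clusterCount {n : ℕ} {L : ℤ} (x : Config n L) : ℕ :=
  (Finset.univ.filter (fun i : Fin n =>
      ∀ j : Fin n, (j : ℕ) + 1 = (i : ℕ) → x.1 j + 1 < x.1 i)).card

noncomputable def delta {n : ℕ} {L : ℤ} (x : Config n L) :
    lp (fun _ : Config n L => ℂ) 2 :=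
  lp.single 2 x 1

namespace Stmt18Aux

variable {n : ℕ} {L : ℤ}

noncomputable instance : Fintype (Config n L) :=
  Fintype.ofInjective
    (fun x : Config n L => (fun i => (⟨x.1 i, (x.2.2 i).1, (x.2.2 i).2⟩ : Set.Icc (-L) L)))
    (by
      intro x y h
      apply Subtype.ext; funext i
      exact congrArg Subtype.val (congrFun h i))

lemma ell1_symm (x y : Config n L) : ell1 x y = ell1 y x := by
  unfold ell1
  refine Finset.sum_congr rfl fun i _ => ?_
  push_cast
  rw [abs_sub_comm]

lemma ell1_diff {x y : Config n L} (h : ell1 x y = 1) :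
    ∃ i : Fin n, (y.1 i - x.1 i = 1 ∨ y.1 i - x.1 i = -1) ∧ ∀ j, j ≠ i → y.1 j = x.1 j := by
  have hZ : ∑ i, |x.1 i - y.1 i| = 1 := by
    have h2 : ((∑ i, |x.1 i - y.1 i| : ℤ) : ℝ) = 1 := by
      push_cast
      simpa [ell1] using h
    exact_mod_cast h2
  have hex : ∃ i, |x.1 i - y.1 i| ≠ 0 := by
    by_contra hc
    push_neg at hc
    simp [hc] at hZ
  obtain ⟨i, hi⟩ := hex
  have h1 : 1 ≤ |x.1 i - y.1 i| := Int.one_le_abs (by simpa [abs_eq_zero] using hi)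
  have hsplit : |x.1 i - y.1 i| + ∑ j ∈ Finset.univ.erase i, |x.1 j - y.1 j| = 1 :=
    (Finset.add_sum_erase Finset.univ (fun j => |x.1 j - y.1 j|) (Finset.mem_univ i)).trans hZ
  have hrest : ∑ j ∈ Finset.univ.erase i, |x.1 j - y.1 j| = 0 := by
    have hnn : 0 ≤ ∑ j ∈ Finset.univ.erase i, |x.1 j - y.1 j| :=
      Finset.sum_nonneg fun j _ => abs_nonneg _
    omega
  have hzero : ∀ j, j ≠ i → x.1 j = y.1 j := by
    intro j hj
    have := (Finset.sum_eq_zero_iff_of_nonneg fun j _ => abs_nonneg (x.1 j - y.1 j)).mp hrest j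
      (Finset.mem_erase.mpr ⟨hj, Finset.mem_univ j⟩)
    have := abs_eq_zero.mp this
    omega
  have habs : |x.1 i - y.1 i| = 1 := by omega
  refine ⟨i, ?_, fun j hj => (hzero j hj).symm⟩
  rcases abs_eq (by norm_num : (0:ℤ) ≤ 1) |>.mp habs with h' | h'
  · right; omega
  · left; omega

def Lset (x : Config n L) : Finset (Fin n) :=
  Finset.univ.filter (fun i : Fin n => ∀ j : Fin n, (j : ℕ) + 1 = (i : ℕ) → x.1 j + 1 < x.1 i)

def Rset (x : Config n L) : Finset (Fin n) :=
  Finset.univ.filter (fun i : Fin n => ∀ j : Fin n, (i : ℕ) + 1 = (j : ℕ) → x.1 i + 1 < x.1 j)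

lemma Lset_card (x : Config n L) : (Lset x).card = clusterCount x := rfl

lemma Rset_card_le (x : Config n L) : (Rset x).card ≤ clusterCount x := by
  classical
  rw [← Lset_card]
  apply Finset.card_le_card_of_injOn
    (fun i : Fin n => if h : (i : ℕ) + 1 < n then (⟨(i : ℕ) + 1, h⟩ : Fin n) else ⟨0, i.pos⟩)
  · intro i hi
    simp only [Rset, Finset.mem_coe, Finset.mem_filter, Finset.mem_univ, true_and] at hi
    by_cases h : (i : ℕ) + 1 < n
    · simp only [dif_pos h, Lset, Finset.mem_coe, Finset.mem_filter, Finset.mem_univ, true_and]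
      intro j hj
      have hji : j = i := by
        apply Fin.ext
        simpa using Nat.succ_injective hj
      subst hji
      exact hi ⟨(j : ℕ) + 1, h⟩ rfl
    · simp only [dif_neg h, Lset, Finset.mem_coe, Finset.mem_filter, Finset.mem_univ, true_and]
      intro j hj
      simp at hj
  · intro a _ b _ hab
    have hv := congrArg Fin.val hab
    have ha := a.isLt
    have hb := b.isLt
    apply Fin.ext
    by_cases h1 : (a : ℕ) + 1 < n <;> by_cases h2 : (b : ℕ) + 1 < n <;>
        simp [h1, h2] at hv <;> omega

lemma moved_right {x y : Config n L} (i : Fin n) (hd : y.1 i - x.1 i = 1)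
    (ho : ∀ j, j ≠ i → y.1 j = x.1 j) : i ∈ Rset x := by
  simp only [Rset, Finset.mem_filter, Finset.mem_univ, true_and]
  intro j hj
  have hij : i < j := by rw [Fin.lt_def]; omega
  have hne : j ≠ i := by rintro rfl; omega
  have := y.2.1 hij
  rw [ho j hne] at this
  omega

lemma moved_left {x y : Config n L} (i : Fin n) (hd : y.1 i - x.1 i = -1)
    (ho : ∀ j, j ≠ i → y.1 j = x.1 j) : i ∈ Lset x := by
  simp only [Lset, Finset.mem_filter, Finset.mem_univ, true_and]
  intro j hj
  have hij : j < i := by rw [Fin.lt_def]; omega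
  have hne : j ≠ i := by rintro rfl; omega
  have := y.2.1 hij
  rw [ho j hne] at this
  omega

lemma neighbor_card_le (x : Config n L) :
    (Finset.univ.filter (fun y : Config n L => ell1 x y = 1)).card ≤ 2 * clusterCount x := by
  classical
  set F : Config n L → Option (Fin n × Bool) := fun y =>
    if h : ell1 x y = 1 then
      some ((ell1_diff h).choose,
        decide (x.1 (ell1_diff h).choose < y.1 (ell1_diff h).choose))
    else none with hF
  have hrec : ∀ y : Config n L, ∀ h : ell1 x y = 1, ∀ i : Fin n, ∀ b : Bool,
      F y = some (i, b) →
      (y.1 = fun j => if j = i then (if b then x.1 i + 1 else x.1 i - 1) else x.1 j) ∧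
      (y.1 i - x.1 i = if b then 1 else -1) := by
    intro y h i b hFy
    rw [hF] at hFy
    simp only [dif_pos h, Option.some.injEq, Prod.mk.injEq] at hFy
    obtain ⟨hi, hb⟩ := hFy
    obtain ⟨hdiff, hoth⟩ := (ell1_diff h).choose_spec
    have hdb : y.1 i - x.1 i = if b then 1 else -1 := by
      rw [← hi, ← hb]
      rcases hdiff with h1 | h1
      · have h2 : x.1 (ell1_diff h).choose < y.1 (ell1_diff h).choose := by omega
        simp only [decide_eq_true_eq, if_pos h2]; omega
      · have h2 : ¬ x.1 (ell1_diff h).choose < y.1 (ell1_diff h).choose := by omega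
        simp only [decide_eq_true_eq, if_neg h2]; omega
    refine ⟨funext fun j => ?_, hdb⟩
    by_cases hj : j = i
    · subst hj
      rw [if_pos rfl]
      rcases b with _ | _
      · simp only [Bool.false_eq_true, if_false] at hdb ⊢; omega
      · simp only [if_true] at hdb ⊢; omega
    · rw [if_neg hj, hoth j (fun hjc => hj (hjc.trans hi))]
  have hmaps : ∀ y ∈ Finset.univ.filter (fun y : Config n L => ell1 x y = 1),
      F y ∈ ((Lset x).image (fun i => some (i, false))) ∪
        ((Rset x).image (fun i => some (i, true))) := by
    intro y hy
    simp only [Finset.mem_filter, Finset.mem_univ, true_and] at hy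
    obtain ⟨i, b, hFy⟩ : ∃ i b, F y = some (i, b) := by
      rw [hF]; simp only [dif_pos hy]; exact ⟨_, _, rfl⟩
    obtain ⟨hy1, hdiff⟩ := hrec y hy i b hFy
    have hoth : ∀ j, j ≠ i → y.1 j = x.1 j := by
      intro j hj; rw [hy1]; simp [hj]
    rw [hFy]
    rcases b with _ | _
    · simp only [Bool.false_eq_true, if_false] at hdiff
      exact Finset.mem_union_left _ (Finset.mem_image_of_mem _ (moved_left i hdiff hoth))
    · simp only [if_true] at hdiff
      exact Finset.mem_union_right _ (Finset.mem_image_of_mem _ (moved_right i hdiff hoth))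
  have hinj : Set.InjOn F (Finset.univ.filter (fun y : Config n L => ell1 x y = 1)) := by
    intro y hy z hz hyz
    simp only [Finset.coe_filter, Finset.mem_univ, true_and, Set.mem_setOf_eq] at hy hz
    obtain ⟨i, b, hFy⟩ : ∃ i b, F y = some (i, b) := by
      rw [hF]; simp only [dif_pos hy]; exact ⟨_, _, rfl⟩
    have hFz : F z = some (i, b) := by rw [← hyz]; exact hFy
    apply Subtype.ext
    rw [(hrec y hy i b hFy).1, (hrec z hz i b hFz).1]
  refine (Finset.card_le_card_of_injOn F hmaps hinj).trans ?_
  calc ((Lset x).image (fun i => some (i, false)) ∪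
      (Rset x).image (fun i => some (i, true))).card
      ≤ ((Lset x).image (fun i => some (i, false))).card +
        ((Rset x).image (fun i => some (i, true))).card := Finset.card_union_le _ _
    _ ≤ (Lset x).card + (Rset x).card := by
        gcongr <;> exact Finset.card_image_le
    _ ≤ 2 * clusterCount x := by
        have h1 := Rset_card_le x
        have h2 := Lset_card x
        omega

lemma ell1_self (x : Config n L) : ell1 x x = 0 := by
  simp [ell1]

end Stmt18Aux

open Stmt18Aux in
theorem stmt18 (n : ℕ) (L : ℤ) (hn : 1 ≤ n) (g : ℝ) (hg : 1 < g)
    (k : ℕ) (hk1 : 1 ≤ k) (hkn : k ≤ n)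
    (V : Config n L → ℝ) (hV : ∀ x, 0 ≤ V x)
    (H : lp (fun _ : Config n L => ℂ) 2 →L[ℂ] lp (fun _ : Config n L => ℂ) 2)
    (hHmat : ∀ x y : Config n L,
      (inner ℂ (delta x) (H (delta y)) : ℂ)
        = if x = y then ((2 * g * (clusterCount x) + V x : ℝ) : ℂ)
          else if ell1 x y = 1 then (-1 : ℂ) else 0)
    (ψ : lp (fun _ : Config n L => ℂ) 2)
    (hψ : ∀ x : Config n L, clusterCount x < k → ψ x = 0) :
    2 * k * (g - 1) * ‖ψ‖ ^ 2 ≤ (inner ℂ ψ (H ψ) : ℂ).re := by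
  classical
  set M : Config n L → Config n L → ℂ := fun x y =>
    if x = y then ((2 * g * (clusterCount x) + V x : ℝ) : ℂ)
    else if ell1 x y = 1 then (-1 : ℂ) else 0 with hM
  set a : Config n L → ℝ := fun x => Complex.normSq (ψ x) with ha
  have ha0 : ∀ x, 0 ≤ a x := fun x => Complex.normSq_nonneg _
  have happly : ∀ (φ : lp (fun _ : Config n L => ℂ) 2) (x : Config n L),
      (inner ℂ (delta x) φ : ℂ) = φ x := by
    intro φ x
    rw [delta, lp.inner_single_left]
    simp [RCLike.inner_apply]
  have hψsum : ψ = ∑ y, ψ y • delta y := by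
    apply lp.ext
    funext j
    rw [lp.coeFn_sum, Finset.sum_apply]
    rw [Finset.sum_eq_single j]
    · rw [lp.coeFn_smul, Pi.smul_apply, delta, lp.single_apply_self]
      simp
    · intro y _ hy
      rw [lp.coeFn_smul, Pi.smul_apply, delta, lp.single_apply_ne 2 y 1 (Ne.symm hy)]
      simp
    · intro h
      exact absurd (Finset.mem_univ j) h
  have hHapp : ∀ x : Config n L, (H ψ) x = ∑ y, ψ y * M x y := by
    intro x
    rw [← happly (H ψ) x]
    conv_lhs => rw [hψsum]
    rw [map_sum, inner_sum]
    refine Finset.sum_congr rfl fun y _ => ?_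
    rw [map_smul, inner_smul_right, hHmat x y]
  have hinner : (inner ℂ ψ (H ψ) : ℂ) = ∑ x, ∑ y, (starRingEnd ℂ) (ψ x) * (ψ y * M x y) := by
    rw [lp.inner_eq_tsum, tsum_fintype]
    refine Finset.sum_congr rfl fun x _ => ?_
    rw [RCLike.inner_apply, hHapp x, Finset.sum_mul]
    exact Finset.sum_congr rfl fun y _ => mul_comm _ _
  have hnormsq : ‖ψ‖ ^ 2 = ∑ x, a x := by
    have h1 : (inner ℂ ψ ψ : ℂ) = ∑ x, (starRingEnd ℂ) (ψ x) * ψ x := by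
      rw [lp.inner_eq_tsum, tsum_fintype]
      exact Finset.sum_congr rfl fun x _ => (RCLike.inner_apply _ _).trans (mul_comm _ _)
    have h2 := inner_self_eq_norm_sq (𝕜 := ℂ) ψ
    rw [h1] at h2
    rw [← h2, RCLike.re_to_complex, Complex.re_sum]
    refine Finset.sum_congr rfl fun x _ => ?_
    rw [ha]
    simp only [Complex.mul_re, Complex.conj_re, Complex.conj_im, Complex.normSq_apply]
    ring
  have hterm : ∀ x y : Config n L,
      (if x = y then a x * (2 * g * (clusterCount x) + V x)
        else if ell1 x y = 1 then -(a x + a y) / 2 else 0)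
      ≤ ((starRingEnd ℂ) (ψ x) * (ψ y * M x y)).re := by
    intro x y
    by_cases hxy : x = y
    · subst hxy
      have hMx : M x x = ((2 * g * (clusterCount x) + V x : ℝ) : ℂ) := by
        rw [hM]; simp
      have hc : ((starRingEnd ℂ) (ψ x) * (ψ x * ((2 * g * (clusterCount x) + V x : ℝ) : ℂ))).re
          = a x * (2 * g * (clusterCount x) + V x) := by
        rw [ha]
        simp only [Complex.mul_re, Complex.mul_im, Complex.conj_re, Complex.conj_im,
          Complex.normSq_apply, Complex.ofReal_re, Complex.ofReal_im]
        ring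
      rw [if_pos rfl, hMx, hc]
    · rw [if_neg hxy]
      by_cases hd : ell1 x y = 1
      · have hMx : M x y = -1 := by rw [hM]; simp [hxy, hd]
        rw [if_pos hd, hMx]
        have hre : ((starRingEnd ℂ) (ψ x) * (ψ y * (-1 : ℂ))).re
            = -((ψ x).re * (ψ y).re + (ψ x).im * (ψ y).im) := by
          simp only [Complex.mul_re, Complex.mul_im, Complex.conj_re, Complex.conj_im,
            Complex.neg_re, Complex.neg_im, Complex.one_re, Complex.one_im]
          ring
        rw [hre, ha]
        simp only [Complex.normSq_apply]
        nlinarith [sq_nonneg ((ψ x).re - (ψ y).re), sq_nonneg ((ψ x).im - (ψ y).im)]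
      · have hMx : M x y = 0 := by rw [hM]; simp [hxy, hd]
        rw [if_neg hd, hMx]
        simp
  have hsplit : ∀ x y : Config n L,
      (if x = y then a x * (2 * g * (clusterCount x) + V x)
        else if ell1 x y = 1 then -(a x + a y) / 2 else 0)
      = (if x = y then a x * (2 * g * (clusterCount x) + V x) else 0)
        + (if ell1 x y = 1 then -(a x + a y) / 2 else 0) := by
    intro x y
    by_cases hxy : x = y
    · subst hxy
      rw [if_pos rfl, if_pos rfl, if_neg (by simp [ell1_self])]
      ring
    · rw [if_neg hxy, if_neg hxy, zero_add]
  set N : Config n L → ℕ := fun x =>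
    (Finset.univ.filter (fun y : Config n L => ell1 x y = 1)).card with hN
  have hoff : ∑ x, ∑ y, (if ell1 x y = 1 then -(a x + a y) / 2 else 0 : ℝ)
      = ∑ x, -(a x) * N x := by
    have e1 : ∀ x y : Config n L, (if ell1 x y = 1 then -(a x + a y) / 2 else 0 : ℝ)
        = (if ell1 x y = 1 then -(a x) / 2 else 0) + (if ell1 x y = 1 then -(a y) / 2 else 0) := by
      intro x y
      by_cases hd : ell1 x y = 1 <;> simp [hd] <;> ring
    simp only [e1, Finset.sum_add_distrib]
    have e2 : ∑ x, ∑ y, (if ell1 x y = 1 then -(a y) / 2 else 0 : ℝ)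
        = ∑ x, ∑ y, (if ell1 x y = 1 then -(a x) / 2 else 0 : ℝ) := by
      rw [Finset.sum_comm]
      refine Finset.sum_congr rfl fun x _ => Finset.sum_congr rfl fun y _ => ?_
      rw [ell1_symm]
    rw [e2, ← Finset.sum_add_distrib]
    refine Finset.sum_congr rfl fun x _ => ?_
    rw [← Finset.sum_add_distrib]
    have e3 : ∀ y : Config n L, ((if ell1 x y = 1 then -(a x) / 2 else 0 : ℝ)
        + (if ell1 x y = 1 then -(a x) / 2 else 0)) = (if ell1 x y = 1 then -(a x) else 0 : ℝ) := by
      intro y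
      by_cases hd : ell1 x y = 1 <;> simp [hd] <;> ring
    simp only [e3]
    rw [← Finset.sum_filter, Finset.sum_const, nsmul_eq_mul]
    ring
  have hmain : ∑ x, (a x * (2 * g * (clusterCount x) + V x) - a x * N x)
      ≤ (inner ℂ ψ (H ψ) : ℂ).re := by
    rw [hinner, Complex.re_sum]
    have hub : ∑ x, ∑ y, (if x = y then a x * (2 * g * (clusterCount x) + V x)
        else if ell1 x y = 1 then -(a x + a y) / 2 else 0 : ℝ)
        ≤ ∑ x : Config n L, (∑ y, (starRingEnd ℂ) (ψ x) * (ψ y * M x y)).re := by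
      refine Finset.sum_le_sum fun x _ => ?_
      rw [Complex.re_sum]
      exact Finset.sum_le_sum fun y _ => hterm x y
    refine le_trans (le_of_eq ?_) hub
    have lhs_eq : ∑ x, (a x * (2 * g * (clusterCount x) + V x) - a x * (N x : ℝ))
        = (∑ x, a x * (2 * g * (clusterCount x) + V x)) + ∑ x, -(a x) * N x := by
      rw [← Finset.sum_add_distrib]
      exact Finset.sum_congr rfl fun x _ => by ring
    rw [lhs_eq]
    simp only [hsplit, Finset.sum_add_distrib, hoff]
    congr 1
    refine Finset.sum_congr rfl fun x _ => ?_
    rw [Finset.sum_ite_eq Finset.univ x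
      (fun x' => a x * (2 * g * (clusterCount x) + V x))]
    simp
  have hpoint : ∀ x : Config n L,
      a x * (2 * ↑k * (g - 1)) ≤ a x * (2 * g * (clusterCount x) + V x) - a x * N x := by
    intro x
    by_cases hz : ψ x = 0
    · rw [ha]
      simp [hz]
    · have hU : (k : ℝ) ≤ (clusterCount x : ℝ) := by
        have hk' : k ≤ clusterCount x := by
          by_contra hlt
          exact hz (hψ x (by omega))
        exact_mod_cast hk'
      have hNle : (N x : ℝ) ≤ 2 * (clusterCount x : ℝ) := by
        have h2 : N x ≤ 2 * clusterCount x := neighbor_card_le x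
        exact_mod_cast h2
      have hVx := hV x
      nlinarith [ha0 x, mul_le_mul_of_nonneg_left hU (ha0 x)]
  calc 2 * (k : ℝ) * (g - 1) * ‖ψ‖ ^ 2 = ∑ x, a x * (2 * ↑k * (g - 1)) := by
        rw [hnormsq, Finset.mul_sum]
        exact Finset.sum_congr rfl fun x _ => by ring
    _ ≤ ∑ x, (a x * (2 * g * (clusterCount x) + V x) - a x * N x) :=
        Finset.sum_le_sum fun x _ => hpoint x
    _ ≤ (inner ℂ ψ (H ψ) : ℂ).re := hmain
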